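/- Let 𝒫 ⊆ [0,1]^n be a polytope, let ℋ_0(𝒫) = {p − q : p, q ∈ affineSpan(𝒫)} be the direction space of its affine span, and suppose ℋ_0(𝒫) ≠ {0} and that ω := min_{u∈ℋ_0(𝒫), ‖u‖=1} (max_{p∈𝒫} ⟨u,p⟩ − min_{p∈𝒫} ⟨u,p⟩) > 0. Let Q be a Bernstein polynomial in n variables of total degree at most d such that Q(x) ≤ ε for all x ∈ 𝒫. Then for every u ∈ ℋ_0(𝒫) with ‖u‖ = 1 and every x ∈ 𝒫, the directional derivative satisfies |∂_u Q(x)| ≤ 2 d² ε / ω. -/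

import Mathlib

open Finset

/-- `P` is a Bernstein polynomial in `n` variables: a finite sum, with strictly
positive real coefficients, of Bernstein monomials `∏ i, Xᵢ^{aᵢ} (1 − Xᵢ)^{bᵢ}`. -/
def IsBernstein {n : ℕ} (P : MvPolynomial (Fin n) ℝ) : Prop :=
  ∃ (m : ℕ) (c : Fin m → ℝ) (a b : Fin m → Fin n → ℕ),
    (∀ s, 0 < c s) ∧
    P = ∑ s, MvPolynomial.C (c s) *
      ∏ i, MvPolynomial.X i ^ a s i * (1 - MvPolynomial.X i) ^ b s i


section Aux

open Polynomial


open Polynomial Finset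

lemma U_eval_one : ∀ n : ℕ, (Polynomial.Chebyshev.U ℝ (n : ℤ)).eval 1 = n + 1 := by
  intro n
  induction n using Nat.strong_induction_on with
  | _ n ih =>
    match n with
    | 0 => simp
    | 1 => norm_num [Polynomial.Chebyshev.U_one]
    | (m+2) =>
      have h1 : ((m+2 : ℕ) : ℤ) = ((m+1:ℕ) : ℤ) + 1 := by push_cast; ring
      have h := Polynomial.Chebyshev.U_add_one ℝ ((m+1:ℕ) : ℤ)
      have h3 : ((m+1:ℕ) : ℤ) - 1 = ((m : ℕ) : ℤ) := by push_cast; ring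
      rw [h1, h, h3]
      have e1 := ih (m+1) (by omega)
      have e2 := ih m (by omega)
      simp only [eval_sub, eval_mul, eval_ofNat, eval_X, e1, e2]
      push_cast
      ring

lemma T_degree_le : ∀ n : ℕ, (Polynomial.Chebyshev.T ℝ (n : ℤ)).degree ≤ n := by
  intro n
  induction n using Nat.strong_induction_on with
  | _ n ih =>
    match n with
    | 0 => simp
    | 1 => simp [Polynomial.Chebyshev.T_one]
    | (m+2) =>
      have h1 : ((m+2 : ℕ) : ℤ) = ((m+1:ℕ) : ℤ) + 1 := by push_cast; ring
      have h := Polynomial.Chebyshev.T_add_one ℝ ((m+1:ℕ) : ℤ)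
      have h3 : ((m+1:ℕ) : ℤ) - 1 = ((m : ℕ) : ℤ) := by push_cast; ring
      rw [h1, h, h3]
      apply le_trans (degree_sub_le _ _)
      apply max_le
      · apply le_trans (degree_mul_le _ _)
        have h2X : degree (2 * X : Polynomial ℝ) ≤ 1 := by
          apply le_trans (degree_mul_le _ _)
          have h2C : (2 : Polynomial ℝ) = C 2 := (map_ofNat C 2).symm
          have : degree (2 : Polynomial ℝ) ≤ 0 := by rw [h2C]; exact degree_C_le
          calc degree (2 : Polynomial ℝ) + degree (X : Polynomial ℝ)
              ≤ 0 + 1 := add_le_add this (le_of_eq degree_X)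
            _ = 1 := by rw [zero_add]
        calc degree (2*X : Polynomial ℝ) + degree (Polynomial.Chebyshev.T ℝ ((m+1:ℕ):ℤ))
            ≤ 1 + (m+1 : ℕ) := add_le_add h2X (ih (m+1) (by omega))
          _ = ((m+2:ℕ) : WithBot ℕ) := by
              rw [← Nat.cast_one, ← Nat.cast_add]
              norm_num
              ring
      · refine le_trans (ih m (by omega)) ?_
        exact_mod_cast Nat.cast_le.2 (by omega : m ≤ m + 2)



lemma derivative_finset_prod {ι} [DecidableEq ι] (s : Finset ι) (f : ι → Polynomial ℝ) :
    Polynomial.derivative (∏ i ∈ s, f i) = ∑ i ∈ s, (∏ j ∈ s.erase i, f j) * Polynomial.derivative (f i) :=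
  Polynomial.derivative_prod



theorem endpoint_markov (d : ℕ) (hd : 1 ≤ d) (ε : ℝ) (p : Polynomial ℝ)
    (hdeg : p.degree < ((d + 1 : ℕ) : WithBot ℕ))
    (hlo : ∀ t ∈ Set.Icc (-1:ℝ) 1, 0 ≤ p.eval t)
    (hhi : ∀ t ∈ Set.Icc (-1:ℝ) 1, p.eval t ≤ ε) :
    |p.derivative.eval 1| ≤ (d:ℝ)^2 / 2 * ε := by
  classical
  have hdR : (0:ℝ) < d := by exact_mod_cast hd
  set v : ℕ → ℝ := fun k => Real.cos (k * Real.pi / d) with hv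
  set s : Finset ℕ := Finset.range (d+1) with hs
  have hang : ∀ k : ℕ, k ≤ d → (k * Real.pi / d) ∈ Set.Icc 0 Real.pi := by
    intro k hk
    constructor
    · positivity
    · rw [div_le_iff₀ hdR]
      have : (k:ℝ) ≤ d := by exact_mod_cast hk
      calc (k:ℝ) * Real.pi ≤ d * Real.pi := by
            apply mul_le_mul_of_nonneg_right this Real.pi_pos.le
        _ = Real.pi * d := by ring
  have hmono : ∀ k l : ℕ, k ≤ d → l ≤ d → k < l → v l < v k := by
    intro k l hk hl hkl
    refine Real.strictAntiOn_cos (hang k hk) (hang l hl) ?_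
    have : (k:ℝ) < l := by exact_mod_cast hkl
    have := Real.pi_pos
    gcongr
  have hinj : Set.InjOn v s := by
    intro a ha b hb hab
    simp only [hs, Finset.coe_range, Set.mem_Iio] at ha hb
    by_contra hne
    rcases lt_or_gt_of_ne hne with h | h
    · exact absurd hab.symm (ne_of_lt (hmono a b (by omega) (by omega) h))
    · exact absurd hab (ne_of_lt (hmono b a (by omega) (by omega) h))
  have hv0 : v 0 = 1 := by simp [hv]
  have hvle : ∀ k, v k ≤ 1 := fun k => Real.cos_le_one _
  have hvge : ∀ k, -1 ≤ v k := fun k => Real.neg_one_le_cos _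
  have hvlt : ∀ k, 1 ≤ k → k ≤ d → v k < 1 := by
    intro k h1 h2
    have := hmono 0 k (by omega) h2 (by omega)
    rwa [hv0] at this
  set w : ℕ → ℝ := fun k => ((Lagrange.basis s v k).derivative).eval 1 with hw
  have hcard : s.card = d + 1 := by simp [hs]
  -- key interpolation identity
  have key : ∀ f : Polynomial ℝ, f.degree < ((d + 1 : ℕ) : WithBot ℕ) →
      f.derivative.eval 1 = ∑ k ∈ s, f.eval (v k) * w k := by
    intro f hf
    have hf' : f.degree < (s.card : WithBot ℕ) := by rw [hcard]; exact_mod_cast hf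
    have hrep := Lagrange.eq_interpolate hinj hf'
    conv_lhs => rw [hrep]
    rw [Lagrange.interpolate_apply, derivative_sum, eval_finset_sum]
    refine Finset.sum_congr rfl fun k hk => ?_
    rw [derivative_C_mul, eval_mul, eval_C]
  have hsum0 : ∑ k ∈ s, w k = 0 := by
    have h1 := key 1 (by
      rw [degree_one]
      exact_mod_cast WithBot.coe_lt_coe.mpr (by omega : 0 < d + 1))
    simpa using h1.symm
  have hsumT : ∑ k ∈ s, (-1:ℝ)^k * w k = (d:ℝ)^2 := by
    have hT := key (Polynomial.Chebyshev.T ℝ (d:ℤ)) (by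
      refine lt_of_le_of_lt (T_degree_le d) ?_
      exact_mod_cast WithBot.coe_lt_coe.mpr (by omega : d < d + 1))
    have hevalT : ∀ k ∈ s, (Polynomial.Chebyshev.T ℝ (d:ℤ)).eval (v k) = (-1:ℝ)^k := by
      intro k hk
      have hθ : ((d:ℤ):ℝ) * (k * Real.pi / d) = k * Real.pi := by
        push_cast
        field_simp
      rw [hv]
      show (Polynomial.Chebyshev.T ℝ (d:ℤ)).eval (Real.cos (k * Real.pi / d)) = _
      rw [Polynomial.Chebyshev.T_real_cos, hθ]
      have := Real.cos_nat_mul_pi_sub 0 k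
      simpa using this
    have hder : (Polynomial.Chebyshev.T ℝ (d:ℤ)).derivative.eval 1 = (d:ℝ)^2 := by
      rw [Polynomial.Chebyshev.T_derivative_eq_U]
      have hcast : ((d:ℤ) - 1) = ((d - 1 : ℕ) : ℤ) := by omega
      rw [hcast, eval_mul]
      rw [U_eval_one (d-1)]
      have hds : ((d - 1 : ℕ) : ℝ) = (d:ℝ) - 1 := by
        rw [Nat.cast_sub hd]; norm_num
      have hev : Polynomial.eval (1:ℝ) (((d:ℤ) : Polynomial ℝ)) = (d:ℝ) := by
        simp
      rw [hds, hev]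
      ring
    rw [hT] at hder
    rw [← hder]
    exact Finset.sum_congr rfl fun k hk => by rw [hevalT k hk]
  -- explicit formula for w
  have hW : ∀ k, w k = ∑ j ∈ s.erase k,
      (∏ l ∈ (s.erase k).erase j, ((v k - v l)⁻¹ * (1 - v l))) * (v k - v j)⁻¹ := by
    intro k
    show ((Lagrange.basis s v k).derivative).eval 1 = _
    rw [Lagrange.basis, derivative_finset_prod, eval_finset_sum]
    refine Finset.sum_congr rfl fun j hj => ?_
    rw [eval_mul, eval_prod]
    congr 1
    · refine Finset.prod_congr rfl fun l hl => ?_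
      simp [Lagrange.basisDivisor]
    · simp [Lagrange.basisDivisor, derivative_C_mul]
  -- signs of w
  have hsign : ∀ k ∈ s, 0 ≤ (-1:ℝ)^k * w k := by
    intro k hk
    simp only [hs, Finset.mem_range] at hk
    rcases Nat.eq_zero_or_pos k with rfl | hkpos
    · simp only [pow_zero, one_mul]
      rw [hW 0]
      apply Finset.sum_nonneg
      intro j hj
      have hj' : j ∈ s ∧ j ≠ 0 := by
        rw [Finset.mem_erase] at hj; exact ⟨hj.2, hj.1⟩
      have hjd : j ≤ d := by
        have := hj'.1; simp only [hs, Finset.mem_range] at this; omega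
      apply mul_nonneg
      · apply Finset.prod_nonneg
        intro l hl
        have hl' : l ∈ s ∧ l ≠ 0 := by
          rw [Finset.mem_erase, Finset.mem_erase] at hl
          exact ⟨hl.2.2, hl.2.1⟩
        have hld : l ≤ d := by
          have := hl'.1; simp only [hs, Finset.mem_range] at this; omega
        apply mul_nonneg
        · rw [hv0]
          have : v l < 1 := hvlt l (by omega) hld
          rw [inv_nonneg]
          linarith
        · linarith [hvle l]
      · rw [hv0]
        have : v j < 1 := hvlt j (by omega) hjd
        rw [inv_nonneg]
        linarith
    · -- k ≥ 1 : only the j = 0 term survives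
      have hk0 : (0:ℕ) ∈ s.erase k := by
        rw [Finset.mem_erase]
        exact ⟨by omega, by simp [hs]⟩
      have hsingle : w k = (∏ l ∈ (s.erase k).erase 0,
          ((v k - v l)⁻¹ * (1 - v l))) * (v k - v 0)⁻¹ := by
        rw [hW k]
        refine Finset.sum_eq_single_of_mem 0 hk0 ?_
        intro j hj hj0
        have h0mem : (0:ℕ) ∈ (s.erase k).erase j := by
          rw [Finset.mem_erase]
          exact ⟨(Ne.symm hj0), hk0⟩
        rw [Finset.prod_eq_zero h0mem (by rw [hv0]; ring), zero_mul]
      -- split the product at k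
      set A : Finset ℕ := (s.erase k).erase 0 with hA
      have hsplit : (∏ l ∈ A, ((v k - v l)⁻¹ * (1 - v l))) =
          (∏ l ∈ A.filter (· < k), ((v k - v l)⁻¹ * (1 - v l))) *
          (∏ l ∈ A.filter (¬ · < k), ((v k - v l)⁻¹ * (1 - v l))) :=
        (Finset.prod_filter_mul_prod_filter_not A _ _).symm
      have hcardB : (A.filter (· < k)).card = k - 1 := by
        have : A.filter (· < k) = Finset.Ioo 0 k := by
          ext l
          simp only [hA, Finset.mem_filter, Finset.mem_erase, Finset.mem_Ioo, hs,
            Finset.mem_range]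
          omega
        rw [this, Nat.card_Ioo]
        omega
      -- first product: (k-1) nonpositive factors
      have hneg : ∀ l ∈ A.filter (· < k), (v k - v l)⁻¹ * (1 - v l) ≤ 0 := by
        intro l hl
        simp only [hA, Finset.mem_filter, Finset.mem_erase, hs, Finset.mem_range] at hl
        have hvkl : v k < v l := hmono l k (by omega) (by omega) hl.2
        apply mul_nonpos_of_nonpos_of_nonneg
        · rw [inv_nonpos]; linarith
        · linarith [hvle l]
      have hpos : ∀ l ∈ A.filter (¬ · < k), 0 ≤ (v k - v l)⁻¹ * (1 - v l) := by
        intro l hl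
        simp only [hA, Finset.mem_filter, Finset.mem_erase, hs, Finset.mem_range] at hl
        have hlk : k < l := by omega
        have hvkl : v l < v k := hmono k l (by omega) (by omega) hlk
        apply mul_nonneg
        · rw [inv_nonneg]; linarith
        · linarith [hvle l]
      -- rewrite first product with signs pulled out
      have hfirst : (∏ l ∈ A.filter (· < k), ((v k - v l)⁻¹ * (1 - v l))) =
          (-1:ℝ)^(k-1) * ∏ l ∈ A.filter (· < k), (-((v k - v l)⁻¹ * (1 - v l))) := by
        rw [← hcardB]
        rw [← Finset.prod_const (-1:ℝ), ← Finset.prod_mul_distrib]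
        refine Finset.prod_congr rfl fun l hl => by ring
      have hlast : (v k - v 0)⁻¹ ≤ 0 := by
        rw [hv0, inv_nonpos]
        have : v k < 1 := hvlt k hkpos (by omega)
        linarith
      have hNN : 0 ≤ (∏ l ∈ A.filter (· < k), (-((v k - v l)⁻¹ * (1 - v l)))) *
          (∏ l ∈ A.filter (¬ · < k), ((v k - v l)⁻¹ * (1 - v l))) * (-(v k - v 0)⁻¹) := by
        apply mul_nonneg
        apply mul_nonneg
        · exact Finset.prod_nonneg fun l hl => by linarith [hneg l hl]
        · exact Finset.prod_nonneg hpos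
        · linarith
      have hkk : (-1:ℝ)^k * (-1:ℝ)^(k-1) = -1 := by
        have : k = (k-1) + 1 := by omega
        rw [this, pow_succ]
        rw [show (k-1) + 1 - 1 = k - 1 from by omega]
        have h2 : (-1:ℝ)^(k-1) * (-1:ℝ)^(k-1) = 1 := by
          rw [← pow_add]
          exact Even.neg_one_pow ⟨k-1, rfl⟩
        calc (-1:ℝ)^(k-1) * -1 * (-1:ℝ)^(k-1) = -((-1:ℝ)^(k-1) * (-1:ℝ)^(k-1)) := by ring
          _ = -1 := by rw [h2]
      calc (0:ℝ) ≤ (∏ l ∈ A.filter (· < k), (-((v k - v l)⁻¹ * (1 - v l)))) *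
          (∏ l ∈ A.filter (¬ · < k), ((v k - v l)⁻¹ * (1 - v l))) * (-(v k - v 0)⁻¹) := hNN
        _ = (-1:ℝ)^k * w k := by
            rw [hsingle, hsplit, hfirst]
            rw [show ((-1:ℝ)^(k-1) * ∏ l ∈ A.filter (· < k), (-((v k - v l)⁻¹ * (1 - v l)))) *
              (∏ l ∈ A.filter (¬ · < k), ((v k - v l)⁻¹ * (1 - v l))) * (v k - v 0)⁻¹
              = ((-1:ℝ)^(k-1) * (v k - v 0)⁻¹) * ((∏ l ∈ A.filter (· < k), (-((v k - v l)⁻¹ * (1 - v l)))) *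
              (∏ l ∈ A.filter (¬ · < k), ((v k - v l)⁻¹ * (1 - v l)))) from by ring]
            rw [show (-1:ℝ)^k * (((-1:ℝ)^(k-1) * (v k - v 0)⁻¹) * ((∏ l ∈ A.filter (· < k), (-((v k - v l)⁻¹ * (1 - v l)))) *
              (∏ l ∈ A.filter (¬ · < k), ((v k - v l)⁻¹ * (1 - v l)))))
              = ((-1:ℝ)^k * (-1:ℝ)^(k-1)) * (v k - v 0)⁻¹ * ((∏ l ∈ A.filter (· < k), (-((v k - v l)⁻¹ * (1 - v l)))) *
              (∏ l ∈ A.filter (¬ · < k), ((v k - v l)⁻¹ * (1 - v l)))) from by ring]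
            rw [hkk]
            ring
  -- membership bounds for nodes
  have hmem : ∀ k, v k ∈ Set.Icc (-1:ℝ) 1 := fun k => ⟨hvge k, hvle k⟩
  -- upper bound
  have hup : p.derivative.eval 1 ≤ (d:ℝ)^2/2 * ε := by
    rw [key p hdeg]
    have hterm : ∀ k ∈ s, p.eval (v k) * w k ≤ ε * ((w k + (-1:ℝ)^k * w k)/2) := by
      intro k hk
      rcases Nat.even_or_odd k with he | ho
      · rw [he.neg_one_pow]
        have hwk : 0 ≤ w k := by
          have := hsign k hk
          rwa [he.neg_one_pow, one_mul] at this
        rw [show (1:ℝ) * w k = w k from one_mul _]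
        rw [show (w k + w k)/2 = w k from by ring]
        exact mul_le_mul_of_nonneg_right (hhi _ (hmem k)) hwk
      · rw [ho.neg_one_pow]
        have hwk : w k ≤ 0 := by
          have := hsign k hk
          rw [ho.neg_one_pow] at this
          linarith
        rw [show (w k + -1 * w k)/2 = 0 from by ring, mul_zero]
        exact mul_nonpos_of_nonneg_of_nonpos (hlo _ (hmem k)) hwk
    calc ∑ k ∈ s, p.eval (v k) * w k ≤ ∑ k ∈ s, ε * ((w k + (-1:ℝ)^k * w k)/2) :=
          Finset.sum_le_sum hterm
      _ = ε * ((∑ k ∈ s, w k) + (∑ k ∈ s, (-1:ℝ)^k * w k))/2 := by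
          have hrw : ∀ k : ℕ, ε * ((w k + (-1:ℝ)^k * w k)/2) = (ε/2) * (w k + (-1:ℝ)^k * w k) :=
            fun k => by ring
          simp_rw [hrw]
          rw [← Finset.mul_sum, Finset.sum_add_distrib]
          ring
      _ = (d:ℝ)^2/2 * ε := by rw [hsum0, hsumT]; ring
  -- lower bound
  have hdown : -((d:ℝ)^2/2 * ε) ≤ p.derivative.eval 1 := by
    rw [key p hdeg]
    have hterm : ∀ k ∈ s, ε * ((w k - (-1:ℝ)^k * w k)/2) ≤ p.eval (v k) * w k := by
      intro k hk
      rcases Nat.even_or_odd k with he | ho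
      · rw [he.neg_one_pow]
        have hwk : 0 ≤ w k := by
          have := hsign k hk
          rwa [he.neg_one_pow, one_mul] at this
        rw [show (w k - 1 * w k)/2 = 0 from by ring, mul_zero]
        exact mul_nonneg (hlo _ (hmem k)) hwk
      · rw [ho.neg_one_pow]
        have hwk : w k ≤ 0 := by
          have := hsign k hk
          rw [ho.neg_one_pow] at this
          linarith
        rw [show (w k - -1 * w k)/2 = w k from by ring]
        exact mul_le_mul_of_nonpos_right (hhi _ (hmem k)) hwk
    calc -((d:ℝ)^2/2 * ε) = ε * ((∑ k ∈ s, w k) - (∑ k ∈ s, (-1:ℝ)^k * w k))/2 := by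
          rw [hsum0, hsumT]; ring
      _ = ∑ k ∈ s, ε * ((w k - (-1:ℝ)^k * w k)/2) := by
          have hrw : ∀ k : ℕ, ε * ((w k - (-1:ℝ)^k * w k)/2) = (ε/2) * (w k - (-1:ℝ)^k * w k) :=
            fun k => by ring
          simp_rw [hrw]
          rw [← Finset.mul_sum, Finset.sum_sub_distrib]
          ring
      _ ≤ ∑ k ∈ s, p.eval (v k) * w k := Finset.sum_le_sum hterm
  rw [abs_le]
  exact ⟨hdown, hup⟩



lemma proj_differentiable {n : ℕ} (i : Fin n) :
    Differentiable ℝ (fun z : Fin n → ℝ => z i) :=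
  (ContinuousLinearMap.proj i : (Fin n → ℝ) →L[ℝ] ℝ).differentiable

lemma mv_eval_differentiable {n : ℕ} (Q : MvPolynomial (Fin n) ℝ) :
    Differentiable ℝ (fun z : Fin n → ℝ => MvPolynomial.eval z Q) := by
  induction Q using MvPolynomial.induction_on with
  | C a => simpa using differentiable_const a
  | add p q hp hq =>
      simp only [MvPolynomial.eval_add]
      exact hp.add hq
  | mul_X p i hp =>
      simp only [MvPolynomial.eval_mul, MvPolynomial.eval_X]
      exact hp.mul (proj_differentiable i)

lemma eval_aeval_comm {n : ℕ} (Q : MvPolynomial (Fin n) ℝ) (f : Fin n → Polynomial ℝ) (t : ℝ) :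
    Polynomial.eval t (MvPolynomial.aeval f Q) =
      MvPolynomial.eval (fun i => Polynomial.eval t (f i)) Q := by
  induction Q using MvPolynomial.induction_on with
  | C a => simp
  | add p q hp hq => simp [hp, hq]
  | mul_X p i hp => simp [hp]

lemma natDegree_aeval_le {n : ℕ} (Q : MvPolynomial (Fin n) ℝ) (f : Fin n → Polynomial ℝ)
    (hf : ∀ i, (f i).natDegree ≤ 1) :
    (MvPolynomial.aeval f Q).natDegree ≤ Q.totalDegree := by
  rw [MvPolynomial.aeval_def, MvPolynomial.eval₂_eq]
  apply Polynomial.natDegree_sum_le_of_forall_le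
  intro m hm
  refine le_trans (Polynomial.natDegree_mul_le) ?_
  have h1 : (algebraMap ℝ (Polynomial ℝ) (MvPolynomial.coeff m Q)).natDegree = 0 := by
    simp [Polynomial.algebraMap_eq]
  rw [h1, zero_add]
  refine le_trans (Polynomial.natDegree_prod_le _ _) ?_
  refine le_trans (Finset.sum_le_sum fun i _ => le_trans (Polynomial.natDegree_pow_le)
    (by
      have := hf i
      calc m i * (f i).natDegree ≤ m i * 1 := Nat.mul_le_mul_left _ this
        _ = m i := Nat.mul_one _)) ?_
  refine le_trans ?_ (MvPolynomial.le_totalDegree hm)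
  rw [Finsupp.sum]


end Aux

set_option maxHeartbeats 1000000 in
/-- **A Markov-brothers-type bound for Bernstein polynomials on a polytope**
(after Wilhelmsen). Let `𝒫 = conv(V) ⊆ [0,1]ⁿ` be a polytope whose affine span has
nontrivial direction space `ℋ₀(𝒫)`, and let `ω > 0` be the minimum width of `𝒫`
over unit directions `u ∈ ℋ₀(𝒫)`, where the width in direction `u` is
`sup_{p∈𝒫} ⟨u,p⟩ − inf_{p∈𝒫} ⟨u,p⟩`. If `Q` is a Bernstein polynomial of total
degree at most `d` with `Q(x) ≤ ε` on `𝒫`, then for every unit `u ∈ ℋ₀(𝒫)` and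
every `x ∈ 𝒫`, the directional derivative satisfies `|∂ᵤQ(x)| ≤ 2 d² ε / ω`. -/
theorem bernstein_directional_derivative_bound (n : ℕ)
    (V : Finset (EuclideanSpace ℝ (Fin n))) (hV : V.Nonempty)
    (P : Set (EuclideanSpace ℝ (Fin n)))
    (hP : P = convexHull ℝ (V : Set (EuclideanSpace ℝ (Fin n))))
    (hcube : ∀ x ∈ P, ∀ i, x i ∈ Set.Icc (0 : ℝ) 1)
    (hdir : (affineSpan ℝ P).direction ≠ ⊥)
    (ω : ℝ) (hωpos : 0 < ω)
    (hω : IsLeast {r : ℝ | ∃ u : EuclideanSpace ℝ (Fin n),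
        u ∈ (affineSpan ℝ P).direction ∧ ‖u‖ = 1 ∧
        r = sSup ((fun p => (inner ℝ u p : ℝ)) '' P) -
          sInf ((fun p => (inner ℝ u p : ℝ)) '' P)} ω)
    (d : ℕ) (ε : ℝ) (Q : MvPolynomial (Fin n) ℝ) (hQB : IsBernstein Q)
    (hdeg : Q.totalDegree ≤ d)
    (hQε : ∀ x ∈ P, MvPolynomial.eval (fun i => x i) Q ≤ ε)
    (u : EuclideanSpace ℝ (Fin n)) (hu : u ∈ (affineSpan ℝ P).direction)
    (hu1 : ‖u‖ = 1)
    (x : EuclideanSpace ℝ (Fin n)) (hx : x ∈ P) :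
    |fderiv ℝ (fun y : EuclideanSpace ℝ (Fin n) =>
        MvPolynomial.eval (fun i => y i) Q) x u| ≤ 2 * d ^ 2 * ε / ω := by
  classical
  set F : EuclideanSpace ℝ (Fin n) → ℝ :=
    fun y => MvPolynomial.eval (fun i => y i) Q with hF
  -- basic properties of P
  have hPconv : Convex ℝ P := hP ▸ convex_convexHull ℝ _
  have hPne : P.Nonempty := by
    rw [hP]
    exact Set.Nonempty.mono (subset_convexHull ℝ _) (by exact_mod_cast hV)
  have hPcompact : IsCompact P := hP ▸ V.finite_toSet.isCompact_convexHull ℝ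
  -- nonnegativity of Q on the cube
  have hQ0 : ∀ z : Fin n → ℝ, (∀ i, z i ∈ Set.Icc (0:ℝ) 1) → 0 ≤ MvPolynomial.eval z Q := by
    obtain ⟨m, c, a, b, hc, hrep⟩ := hQB
    intro z hz
    rw [hrep, map_sum]
    apply Finset.sum_nonneg
    intro s _
    rw [map_mul, MvPolynomial.eval_C, map_prod]
    apply mul_nonneg (hc s).le
    apply Finset.prod_nonneg
    intro i _
    rw [map_mul, map_pow, map_pow, MvPolynomial.eval_X, map_sub, map_one, MvPolynomial.eval_X]
    have h1 := (hz i).1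
    have h2 := (hz i).2
    apply mul_nonneg (pow_nonneg h1 _) (pow_nonneg (by linarith) _)
  have hQ0P : ∀ p ∈ P, 0 ≤ F p := fun p hp => hQ0 _ (hcube p hp)
  have hεnn : 0 ≤ ε := le_trans (hQ0P x hx) (hQε x hx)
  -- differentiability
  have hFdiff : Differentiable ℝ F := by
    have hcomp : F = (fun z : Fin n → ℝ => MvPolynomial.eval z Q) ∘
        (PiLp.continuousLinearEquiv 2 ℝ (fun _ : Fin n => ℝ)) := rfl
    rw [hcomp]
    exact (mv_eval_differentiable Q).comp
      (PiLp.continuousLinearEquiv 2 ℝ (fun _ : Fin n => ℝ)).differentiable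
  set L : EuclideanSpace ℝ (Fin n) →L[ℝ] ℝ := fderiv ℝ F x with hL
  -- the key directional derivative bound along chords of P
  have hkey : ∀ y ∈ P, |L (y - x)| ≤ (d:ℝ)^2 * ε := by
    intro y hy
    set f : Fin n → Polynomial ℝ := fun i =>
      Polynomial.C (x i) + Polynomial.C ((y i - x i)/2) * (1 - Polynomial.X) with hf
    set H := MvPolynomial.aeval f Q with hH
    set ψ : ℝ → EuclideanSpace ℝ (Fin n) := fun t => x + ((1-t)/2) • (y - x) with hψdef
    have hψx : ψ 1 = x := by
      rw [hψdef]
      norm_num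
    have hHeval : ∀ t : ℝ, H.eval t = F (ψ t) := by
      intro t
      rw [hH, eval_aeval_comm]
      have hfun2 : (fun i => Polynomial.eval t (f i)) = (fun i => (ψ t) i) := by
        funext i
        have hcoord : (ψ t) i = x i + (1-t)/2 * (y i - x i) := by
          simp [hψdef, PiLp.add_apply, PiLp.smul_apply, PiLp.sub_apply, smul_eq_mul]
        rw [hcoord, hf]
        simp
        ring
      rw [hfun2]
    have hseg : ∀ t ∈ Set.Icc (-1:ℝ) 1, ψ t ∈ P := by
      intro t ht
      set s : ℝ := (1-t)/2 with hsdef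
      have hs0 : 0 ≤ s := by rw [hsdef]; simp at ht ⊢; linarith [ht.2]
      have hs1 : s ≤ 1 := by rw [hsdef]; simp at ht ⊢; linarith [ht.1]
      have : ψ t = (1-s) • x + s • y := by
        rw [hψdef]
        show x + s • (y - x) = (1-s) • x + s • y
        rw [smul_sub, sub_smul, one_smul]
        abel
      rw [this]
      exact hPconv hx hy (by linarith) hs0 (by ring)
    have hlo : ∀ t ∈ Set.Icc (-1:ℝ) 1, 0 ≤ H.eval t := by
      intro t ht
      rw [hHeval t]
      exact hQ0P _ (hseg t ht)
    have hhi : ∀ t ∈ Set.Icc (-1:ℝ) 1, H.eval t ≤ ε := by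
      intro t ht
      rw [hHeval t]
      exact hQε _ (hseg t ht)
    have hdegf : ∀ i, (f i).natDegree ≤ 1 := by
      intro i
      rw [hf]
      apply le_trans (Polynomial.natDegree_add_le _ _)
      simp only [Polynomial.natDegree_C, max_le_iff]
      constructor
      · omega
      · apply le_trans (Polynomial.natDegree_mul_le)
        rw [Polynomial.natDegree_C, zero_add]
        apply le_trans (Polynomial.natDegree_sub_le _ _)
        simp
    have hdegH : H.degree < ((d + 1 : ℕ) : WithBot ℕ) := by
      apply lt_of_le_of_lt H.degree_le_natDegree
      have h1 : H.natDegree ≤ d := le_trans (natDegree_aeval_le Q f hdegf) hdeg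
      exact_mod_cast Nat.lt_succ_of_le h1
    -- derivative identity : L (y - x) = -2 * H'(1)
    have hψder : HasDerivAt ψ ((-(1:ℝ)/2) • (y - x)) 1 := by
      have h1 : HasDerivAt (fun t : ℝ => (1-t)/2) (-(1:ℝ)/2) 1 := by
        have := ((hasDerivAt_id (1:ℝ)).const_sub 1).div_const 2
        simpa using this
      have h2 := h1.smul_const (y - x)
      exact h2.const_add x
    have hFat : HasFDerivAt F L (ψ 1) := by
      rw [hψx]
      exact (hFdiff x).hasFDerivAt
    have hcomp := hFat.comp_hasDerivAt 1 hψder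
    have hHder : HasDerivAt (fun t => H.eval t) (H.derivative.eval 1) 1 :=
      H.hasDerivAt 1
    have hfun : (fun t => H.eval t) = (F ∘ ψ) := by
      funext t
      exact hHeval t
    rw [hfun] at hHder
    have huniq : L ((-(1:ℝ)/2) • (y - x)) = H.derivative.eval 1 :=
      hcomp.unique hHder
    have hLv : L (y - x) = -2 * H.derivative.eval 1 := by
      rw [← huniq, map_smul]
      simp
      ring
    rcases Nat.eq_zero_or_pos d with hd0 | hdpos
    · -- degree < 1 : H is constant, derivative vanishes
      have hd1 : H.degree < (1 : WithBot ℕ) := by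
        rw [hd0] at hdegH
        exact_mod_cast hdegH
      have hdc : H.degree ≤ 0 := Nat.WithBot.lt_one_iff_le_zero.mp hd1
      have hC := Polynomial.eq_C_of_degree_le_zero hdc
      rw [hLv, hC]
      simp only [Polynomial.derivative_C, Polynomial.eval_zero, mul_zero, abs_zero]
      exact mul_nonneg (by positivity) hεnn
    · have hmk := endpoint_markov d hdpos ε H hdegH hlo hhi
      rw [hLv, abs_mul, abs_neg]
      calc |(2:ℝ)| * |H.derivative.eval 1| ≤ 2 * ((d:ℝ)^2/2 * ε) := by
            rw [abs_two]
            apply mul_le_mul_of_nonneg_left hmk (by norm_num)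
        _ = (d:ℝ)^2 * ε := by ring
  -- Riesz representation of L on the direction space
  set W := (affineSpan ℝ P).direction with hW
  obtain ⟨G, hGW, hg_eq⟩ : ∃ G : EuclideanSpace ℝ (Fin n), G ∈ W ∧
      ∀ v ∈ W, (inner ℝ G v : ℝ) = L v := by
    set g0 : EuclideanSpace ℝ (Fin n) :=
      (InnerProductSpace.toDual ℝ (EuclideanSpace ℝ (Fin n))).symm L with hg0
    refine ⟨(W.orthogonalProjection g0 : EuclideanSpace ℝ (Fin n)), Submodule.coe_mem _, ?_⟩
    intro v hv
    have h1 : (inner ℝ (g0 - (W.orthogonalProjection g0 : EuclideanSpace ℝ (Fin n))) v : ℝ) = 0 :=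
      W.starProjection_inner_eq_zero g0 v hv
    have h2 : (inner ℝ g0 v : ℝ) = L v := InnerProductSpace.toDual_symm_apply
    rw [inner_sub_left] at h1
    have h3 : (inner ℝ ((W.orthogonalProjection g0 : EuclideanSpace ℝ (Fin n))) v : ℝ)
        = (inner ℝ g0 v : ℝ) := by linarith [h1]
    rw [h3, h2]
  have hLu : |L u| ≤ ‖G‖ := by
    rw [← hg_eq u hu]
    calc |(inner ℝ G u : ℝ)| ≤ ‖G‖ * ‖u‖ := abs_real_inner_le_norm G u
      _ = ‖G‖ := by rw [hu1, mul_one]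
  by_cases hGz : G = 0
  · rw [hGz] at hLu
    simp at hLu
    have : |L u| = 0 := le_antisymm (by simpa using hLu) (abs_nonneg _)
    rw [hL] at this
    rw [this]
    positivity
  · -- width argument
    obtain ⟨e, heW, he1, hGe⟩ : ∃ e : EuclideanSpace ℝ (Fin n), e ∈ W ∧ ‖e‖ = 1 ∧
        G = ‖G‖ • e := by
      refine ⟨‖G‖⁻¹ • G, Submodule.smul_mem W _ hGW, norm_smul_inv_norm hGz, ?_⟩
      rw [smul_smul, mul_inv_cancel₀ (norm_ne_zero_iff.2 hGz), one_smul]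
    set φ : EuclideanSpace ℝ (Fin n) → ℝ := fun p => (inner ℝ e p : ℝ) with hφ
    have hφcont : Continuous φ := by
      apply Continuous.inner continuous_const continuous_id
    obtain ⟨ymax, hymaxP, hmax⟩ := hPcompact.exists_isMaxOn hPne hφcont.continuousOn
    obtain ⟨ymin, hyminP, hmin⟩ := hPcompact.exists_isMinOn hPne hφcont.continuousOn
    have hsup : sSup (φ '' P) = φ ymax := by
      apply IsGreatest.csSup_eq
      constructor
      · exact Set.mem_image_of_mem φ hymaxP
      · rintro r ⟨p, hp, rfl⟩
        exact hmax hp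
    have hinf : sInf (φ '' P) = φ ymin := by
      apply IsLeast.csInf_eq
      constructor
      · exact Set.mem_image_of_mem φ hyminP
      · rintro r ⟨p, hp, rfl⟩
        exact hmin hp
    have hwidth : ω ≤ φ ymax - φ ymin := by
      have hmem : φ ymax - φ ymin ∈ {r : ℝ | ∃ u : EuclideanSpace ℝ (Fin n),
          u ∈ (affineSpan ℝ P).direction ∧ ‖u‖ = 1 ∧
          r = sSup ((fun p => (inner ℝ u p : ℝ)) '' P) -
            sInf ((fun p => (inner ℝ u p : ℝ)) '' P)} := by
        exact ⟨e, heW, he1, by rw [hsup, hinf]⟩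
      exact hω.2 hmem
    have hxmid : φ ymin ≤ φ x ∧ φ x ≤ φ ymax := ⟨hmin hx, hmax hx⟩
    -- choose a far point
    have hfar : ∃ y ∈ P, ω/2 ≤ |φ y - φ x| := by
      by_cases hcase : ω/2 ≤ φ ymax - φ x
      · exact ⟨ymax, hymaxP, by rw [abs_of_nonneg (by linarith [hxmid.2])]; linarith⟩
      · refine ⟨ymin, hyminP, ?_⟩
        push_neg at hcase
        rw [abs_of_nonpos (by linarith [hxmid.1])]
        linarith
    obtain ⟨y, hyP, hfar⟩ := hfar
    have hvW : y - x ∈ W := by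
      have h1 : y ∈ affineSpan ℝ P := subset_affineSpan ℝ P hyP
      have h2 : x ∈ affineSpan ℝ P := subset_affineSpan ℝ P hx
      exact AffineSubspace.vsub_mem_direction h1 h2
    have hinner : (inner ℝ G (y - x) : ℝ) = ‖G‖ * (φ y - φ x) := by
      calc (inner ℝ G (y - x) : ℝ) = (inner ℝ ((‖G‖:ℝ) • e) (y - x) : ℝ) := by rw [← hGe]
        _ = ‖G‖ * (inner ℝ e (y - x) : ℝ) := real_inner_smul_left _ _ _
        _ = ‖G‖ * (φ y - φ x) := by rw [inner_sub_right]
    have hGnorm : ‖G‖ * (ω/2) ≤ (d:ℝ)^2 * ε := by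
      calc ‖G‖ * (ω/2) ≤ ‖G‖ * |φ y - φ x| :=
            mul_le_mul_of_nonneg_left hfar (norm_nonneg _)
        _ = |(inner ℝ G (y - x) : ℝ)| := by
            rw [hinner, abs_mul, abs_of_nonneg (norm_nonneg G)]
        _ = |L (y - x)| := by rw [hg_eq _ hvW]
        _ ≤ (d:ℝ)^2 * ε := hkey y hyP
    have hGle : ‖G‖ ≤ 2 * (d:ℝ)^2 * ε / ω := by
      rw [le_div_iff₀ hωpos]
      nlinarith [hGnorm]
    calc |L u| ≤ ‖G‖ := hLu
      _ ≤ 2 * (d:ℝ)^2 * ε / ω := hGle
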